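/- For integers 1 ≤ r ≤ l define C_{l,r} := Σ_{π} ∏_{B ∈ π} c_{|B|}, the sum ranging over all set partitions π of {1, …, l} into exactly r non-empty blocks, where c_m := ∏_{i=1}^{m-1}(2i - 1) (with c_1 = 1). Then for every l ≥ 2 and 1 ≤ r ≤ l, C_{l,r} = (2l - r - 2)·C_{l-1,r} + C_{l-1,r-1}, with the conventions C_{1,1} = 1 and C_{l,r} = 0 whenever r < 1 or r > l. -/

import Mathlib

open Finset

/-- `cShape m = ∏_{i=1}^{m-1} (2i-1)`: the number of binary tree shapes with
`m` labelled leaves (as a real number), with `cShape 1 = 1`. -/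
def cShape (m : ℕ) : ℝ := ∏ i ∈ Finset.range (m - 1), (2 * (i : ℝ) + 1)

/-- `C l r = Σ_π ∏_{B ∈ π} c_{|B|}`, summing over set partitions of `{1,…,l}`
into exactly `r` non-empty blocks. -/
noncomputable def C (l r : ℕ) : ℝ :=
  ∑ P ∈ (Finset.univ : Finset (Finpartition (Finset.univ : Finset (Fin l)))).filter
      (fun P => P.parts.card = r),
    ∏ B ∈ P.parts, cShape B.card

namespace Stmt13

variable {α : Type*} {β : Type*} [DecidableEq α] [DecidableEq β]

/-- Weight-sum over partitions of an arbitrary finset. -/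
noncomputable def W (s : Finset α) (r : ℕ) : ℝ :=
  ∑ P ∈ (Finset.univ : Finset (Finpartition s)).filter
      (fun P => P.parts.card = r),
    ∏ B ∈ P.parts, cShape B.card

lemma cShape_succ (k : ℕ) : cShape (k + 2) = (2 * (k + 1 : ℝ) - 1) * cShape (k + 1) := by
  have h1 : k + 2 - 1 = k + 1 := rfl
  have h2 : k + 1 - 1 = k := rfl
  simp only [cShape, h1, h2]
  rw [Finset.prod_range_succ]
  push_cast
  ring

lemma cShape_succ_card {B : Finset α} (hB : B.Nonempty) :
    cShape (B.card + 1) = (2 * (B.card : ℝ) - 1) * cShape B.card := by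
  obtain ⟨k, hk⟩ := Nat.exists_eq_add_of_le (Finset.card_pos.2 hB)
  rw [show B.card = k + 1 by omega]
  push_cast
  exact cShape_succ k

section Main

variable {s : Finset α} {a : α}

lemma subset_of_mem_parts {P : Finpartition (insert a s)} {B : Finset α}
    (hB : B ∈ P.parts) (haB : a ∉ B) : B ⊆ s := by
  intro x hx
  have := P.le hB hx
  rcases Finset.mem_insert.1 this with h | h
  · exact absurd (h ▸ hx) haB
  · exact h

/-- Insert `a` into the block `B` of a partition of `s`. -/
def insertPart (ha : a ∉ s) (Q : Finpartition s) (B : Finset α) (hB : B ∈ Q.parts) :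
    Finpartition (insert a s) where
  parts := insert (insert a B) (Q.parts.erase B)
  supIndep := by
    rw [Finset.supIndep_iff_pairwiseDisjoint, Finset.coe_insert]
    refine Set.PairwiseDisjoint.insert (Q.disjoint.subset ?_) ?_
    · exact fun x hx => Finset.mem_coe.2 (Finset.mem_of_mem_erase hx)
    · intro d hd _
      have hd' : d ∈ Q.parts := Finset.mem_of_mem_erase hd
      have hda : a ∉ d := fun h => ha (Q.le hd' h)
      have hdB : d ≠ B := Finset.ne_of_mem_erase hd
      simp only [id_eq]
      rw [Finset.disjoint_insert_left]
      exact ⟨hda, Q.disjoint hB hd' (Ne.symm hdB)⟩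
  sup_parts := by
    have h1 : B ∪ (Q.parts.erase B).sup id = s := by
      have := Q.sup_parts
      rw [← Finset.insert_erase hB, Finset.sup_insert] at this
      simpa using this
    rw [Finset.sup_insert]
    show insert a B ∪ (Q.parts.erase B).sup id = insert a s
    rw [Finset.insert_union, h1]
  bot_notMem := by
    intro h
    rcases Finset.mem_insert.1 h with h | h
    · exact (Finset.insert_ne_empty a B) h.symm
    · exact Q.bot_notMem (Finset.mem_of_mem_erase h)

lemma insertPart_parts (ha : a ∉ s) (Q : Finpartition s) (B : Finset α) (hB : B ∈ Q.parts) :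
    (insertPart ha Q B hB).parts = insert (insert a B) (Q.parts.erase B) := rfl

lemma insert_not_mem_erase (ha : a ∉ s) (Q : Finpartition s) (B : Finset α) :
    insert a B ∉ Q.parts.erase B := by
  intro h
  have h' := Finset.mem_of_mem_erase h
  exact ha (Q.le h' (Finset.mem_insert_self a B))

lemma insertPart_card (ha : a ∉ s) (Q : Finpartition s) (B : Finset α) (hB : B ∈ Q.parts) :
    (insertPart ha Q B hB).parts.card = Q.parts.card := by
  rw [insertPart_parts, Finset.card_insert_of_notMem (insert_not_mem_erase ha Q B),
    Finset.card_erase_of_mem hB]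
  have : 1 ≤ Q.parts.card := Finset.card_pos.2 ⟨B, hB⟩
  omega

lemma insertPart_part_a (ha : a ∉ s) (Q : Finpartition s) (B : Finset α) (hB : B ∈ Q.parts) :
    (insertPart ha Q B hB).part a = insert a B := by
  refine Finpartition.part_eq_of_mem _ ?_ (Finset.mem_insert_self a B)
  rw [insertPart_parts]
  exact Finset.mem_insert_self _ _

/-- Delete `a` from a partition of `insert a s`, when its block is not a singleton. -/
def erasePart (ha : a ∉ s) (P : Finpartition (insert a s)) (hne : P.part a ≠ {a}) :
    Finpartition s := by
  classical
  have hmem : a ∈ insert a s := Finset.mem_insert_self a s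
  have hA : P.part a ∈ P.parts := P.part_mem.2 hmem
  have haA : a ∈ P.part a := P.mem_part hmem
  refine ⟨insert ((P.part a).erase a) (P.parts.erase (P.part a)), ?_, ?_, ?_⟩
  · rw [Finset.supIndep_iff_pairwiseDisjoint, Finset.coe_insert]
    refine Set.PairwiseDisjoint.insert (P.disjoint.subset ?_) ?_
    · exact fun x hx => Finset.mem_coe.2 (Finset.mem_of_mem_erase hx)
    · intro d hd _
      have hd' : d ∈ P.parts := Finset.mem_of_mem_erase hd
      have hdA : d ≠ P.part a := Finset.ne_of_mem_erase hd
      exact Finset.disjoint_of_subset_left (Finset.erase_subset a _)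
        (P.disjoint hA hd' (Ne.symm hdA))
  · have h1 : (P.part a) ∪ (P.parts.erase (P.part a)).sup id = insert a s := by
      have := P.sup_parts
      rw [← Finset.insert_erase hA, Finset.sup_insert] at this
      simpa using this
    have haX : a ∉ (P.parts.erase (P.part a)).sup id := by
      intro h
      rw [Finset.mem_sup] at h
      obtain ⟨v, hv, hav⟩ := h
      have hv' : v ∈ P.parts := Finset.mem_of_mem_erase hv
      exact Finset.ne_of_mem_erase hv (P.part_eq_of_mem hv' hav).symm
    rw [Finset.sup_insert]
    show (P.part a).erase a ∪ (P.parts.erase (P.part a)).sup id = s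
    calc (P.part a).erase a ∪ (P.parts.erase (P.part a)).sup id
        = ((P.part a) ∪ (P.parts.erase (P.part a)).sup id).erase a := by
          rw [Finset.erase_union_distrib, Finset.erase_eq_of_notMem haX]
      _ = s := by rw [h1, Finset.erase_insert ha]
  · intro h
    rcases Finset.mem_insert.1 h with h | h
    · have h' : (P.part a).erase a = ∅ := h.symm
      rcases (Finset.erase_eq_empty_iff _ _).1 h' with h'' | h''
      · exact absurd (h'' ▸ haA) (Finset.notMem_empty a)
      · exact hne h''
    · exact P.bot_notMem (Finset.mem_of_mem_erase h)

lemma erasePart_parts (ha : a ∉ s) (P : Finpartition (insert a s)) (hne : P.part a ≠ {a}) :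
    (erasePart ha P hne).parts
      = insert ((P.part a).erase a) (P.parts.erase (P.part a)) := rfl

lemma cShape_one : cShape 1 = 1 := by simp [cShape]

lemma part_a_mem (P : Finpartition (insert a s)) : P.part a ∈ P.parts :=
  P.part_mem.2 (Finset.mem_insert_self a s)

lemma mem_part_a (P : Finpartition (insert a s)) : a ∈ P.part a :=
  P.mem_part (Finset.mem_insert_self a s)

lemma erase_not_mem (P : Finpartition (insert a s)) :
    (P.part a).erase a ∉ P.parts.erase (P.part a) := by
  intro h
  have h1 : (P.part a).erase a ∈ P.parts := Finset.mem_of_mem_erase h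
  obtain ⟨x, hx⟩ := P.nonempty_of_mem_parts h1
  have hx' : x ∈ P.part a := Finset.mem_of_mem_erase hx
  exact Finset.ne_of_mem_erase h (P.eq_of_mem_parts h1 (part_a_mem P) hx hx')

lemma erasePart_card (ha : a ∉ s) (P : Finpartition (insert a s)) (hne : P.part a ≠ {a}) :
    (erasePart ha P hne).parts.card = P.parts.card := by
  rw [erasePart_parts, Finset.card_insert_of_notMem (erase_not_mem P),
    Finset.card_erase_of_mem (part_a_mem P)]
  have : 1 ≤ P.parts.card := Finset.card_pos.2 ⟨_, part_a_mem P⟩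
  omega

lemma singleton_not_mem (ha : a ∉ s) (Q : Finpartition s) : {a} ∉ Q.parts := fun h =>
  ha (Q.le h (Finset.mem_singleton_self a))

/-- Delete the singleton block `{a}` from a partition of `insert a s`. -/
def eraseSingle (ha : a ∉ s) (P : Finpartition (insert a s)) (h1 : {a} ∈ P.parts) :
    Finpartition s where
  parts := P.parts.erase {a}
  supIndep := by
    rw [Finset.supIndep_iff_pairwiseDisjoint]
    exact P.disjoint.subset fun x hx => Finset.mem_coe.2 (Finset.mem_of_mem_erase hx)
  sup_parts := by
    have haX : a ∉ (P.parts.erase {a}).sup id := by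
      intro h
      rw [Finset.mem_sup] at h
      obtain ⟨v, hv, hav⟩ := h
      exact Finset.ne_of_mem_erase hv
        (P.eq_of_mem_parts (Finset.mem_of_mem_erase hv) h1 hav (Finset.mem_singleton_self a))
    have h2 : ({a} : Finset α) ∪ (P.parts.erase {a}).sup id = insert a s := by
      have := P.sup_parts
      rw [← Finset.insert_erase h1, Finset.sup_insert] at this
      simpa using this
    calc (P.parts.erase {a}).sup id
        = (({a} : Finset α) ∪ (P.parts.erase {a}).sup id).erase a := by
          rw [Finset.erase_union_distrib, Finset.erase_singleton,
            Finset.erase_eq_of_notMem haX, Finset.empty_union]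
      _ = s := by rw [h2, Finset.erase_insert ha]
  bot_notMem := fun h => P.bot_notMem (Finset.mem_of_mem_erase h)

lemma eraseSingle_parts (ha : a ∉ s) (P : Finpartition (insert a s)) (h1 : {a} ∈ P.parts) :
    (eraseSingle ha P h1).parts = P.parts.erase {a} := rfl

lemma insertPart_weight (ha : a ∉ s) (Q : Finpartition s) (B : Finset α) (hB : B ∈ Q.parts) :
    ∏ B' ∈ (insertPart ha Q B hB).parts, cShape B'.card
      = (2 * (B.card : ℝ) - 1) * ∏ B' ∈ Q.parts, cShape B'.card := by
  have haB : a ∉ B := fun h => ha (Q.le hB h)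
  rw [insertPart_parts, Finset.prod_insert (insert_not_mem_erase ha Q B),
    Finset.card_insert_of_notMem haB, cShape_succ_card (Q.nonempty_of_mem_parts hB),
    mul_assoc]
  congr 1
  exact Finset.mul_prod_erase Q.parts (fun B' => cShape B'.card) hB

lemma sum_singleton_case (ha : a ∉ s) (r : ℕ) (hr : 1 ≤ r) :
    ∑ P ∈ ((Finset.univ : Finset (Finpartition (insert a s))).filter
        (fun P => P.parts.card = r)).filter (fun P => P.part a = {a}),
      ∏ B ∈ P.parts, cShape B.card = W s (r - 1) := by
  have hb : ({a} : Finset α) ≠ (⊥ : Finset α) := by simp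
  have hab : Disjoint s ({a} : Finset α) := by simpa using ha
  have hc : s ⊔ ({a} : Finset α) = insert a s := by
    rw [sup_comm]
    exact (Finset.insert_eq a s).symm
  have hmem : ∀ P : Finpartition (insert a s), P.part a = {a} → {a} ∈ P.parts :=
    fun P h => h ▸ part_a_mem P
  rw [W]
  refine Finset.sum_bij'
    (i := fun P hP => eraseSingle ha P (hmem P (Finset.mem_filter.1 hP).2))
    (j := fun Q _ => Q.extend hb hab hc) ?_ ?_ ?_ ?_ ?_
  · intro P hP
    obtain ⟨hP1, hP2⟩ := Finset.mem_filter.1 hP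
    have hcard := (Finset.mem_filter.1 hP1).2
    rw [Finset.mem_filter]
    refine ⟨Finset.mem_univ _, ?_⟩
    rw [eraseSingle_parts, Finset.card_erase_of_mem (hmem P hP2), hcard]
  · intro Q hQ
    have hcard := (Finset.mem_filter.1 hQ).2
    rw [Finset.mem_filter, Finset.mem_filter]
    have hmem' : ({a} : Finset α) ∈ (Q.extend hb hab hc).parts := by
      rw [Finpartition.extend_parts]
      exact Finset.mem_insert_self _ _
    refine ⟨⟨Finset.mem_univ _, ?_⟩, ?_⟩
    · rw [Finpartition.card_extend, hcard]
      omega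
    · exact Finpartition.part_eq_of_mem _ hmem' (Finset.mem_singleton_self a)
  · intro P hP
    ext1
    rw [Finpartition.extend_parts, eraseSingle_parts,
      Finset.insert_erase (hmem P (Finset.mem_filter.1 hP).2)]
  · intro Q _
    ext1
    rw [eraseSingle_parts, Finpartition.extend_parts,
      Finset.erase_insert (singleton_not_mem ha Q)]
  · intro P hP
    rw [eraseSingle_parts, ← Finset.mul_prod_erase _ _ (hmem P (Finset.mem_filter.1 hP).2),
      Finset.card_singleton, cShape_one, one_mul]

lemma insertPart_part_ne (ha : a ∉ s) (Q : Finpartition s) (B : Finset α) (hB : B ∈ Q.parts) :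
    (insertPart ha Q B hB).part a ≠ {a} := by
  rw [insertPart_part_a]
  obtain ⟨b, hb⟩ := Q.nonempty_of_mem_parts hB
  intro h
  have hba : b ≠ a := fun h' => ha (h' ▸ Q.le hB hb)
  have : b ∈ ({a} : Finset α) := h ▸ Finset.mem_insert_of_mem hb
  exact hba (Finset.mem_singleton.1 this)

lemma sum_nonsingleton_case (ha : a ∉ s) (r : ℕ) :
    ∑ P ∈ ((Finset.univ : Finset (Finpartition (insert a s))).filter
        (fun P => P.parts.card = r)).filter (fun P => ¬ P.part a = {a}),
      ∏ B ∈ P.parts, cShape B.card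
    = ∑ Q ∈ (Finset.univ : Finset (Finpartition s)).filter (fun Q => Q.parts.card = r),
        ∑ B ∈ Q.parts, (2 * (B.card : ℝ) - 1) * ∏ B' ∈ Q.parts, cShape B'.card := by
  rw [Finset.sum_sigma']
  symm
  refine Finset.sum_bij'
    (i := fun x hx => insertPart ha x.1 x.2 (Finset.mem_sigma.1 hx).2)
    (j := fun P hP => ⟨erasePart ha P (Finset.mem_filter.1 hP).2, (P.part a).erase a⟩)
    ?_ ?_ ?_ ?_ ?_
  · intro x hx
    obtain ⟨hx1, hx2⟩ := Finset.mem_sigma.1 hx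
    have hcard := (Finset.mem_filter.1 hx1).2
    rw [Finset.mem_filter, Finset.mem_filter]
    exact ⟨⟨Finset.mem_univ _, by rw [insertPart_card, hcard]⟩,
      insertPart_part_ne ha x.1 x.2 hx2⟩
  · intro P hP
    obtain ⟨hP1, hP2⟩ := Finset.mem_filter.1 hP
    have hcard := (Finset.mem_filter.1 hP1).2
    rw [Finset.mem_sigma]
    constructor
    · rw [Finset.mem_filter]
      exact ⟨Finset.mem_univ _, by rw [erasePart_card, hcard]⟩
    · rw [erasePart_parts]
      exact Finset.mem_insert_self _ _
  · intro x hx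
    obtain ⟨hx1, hx2⟩ := Finset.mem_sigma.1 hx
    obtain ⟨Q, B⟩ := x
    have haB : a ∉ B := fun h => ha (Q.le hx2 h)
    have hpa := insertPart_part_a ha Q B hx2
    refine Sigma.ext ?_ ?_
    · ext1
      simp only
      rw [erasePart_parts, hpa, Finset.erase_insert haB, insertPart_parts,
        Finset.erase_insert (insert_not_mem_erase ha Q B), Finset.insert_erase hx2]
    · simp only
      rw [hpa, Finset.erase_insert haB]
  · intro P hP
    ext1
    rw [insertPart_parts, erasePart_parts, Finset.insert_erase (mem_part_a P),
      Finset.erase_insert (erase_not_mem P), Finset.insert_erase (part_a_mem P)]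
  · intro x hx
    obtain ⟨hx1, hx2⟩ := Finset.mem_sigma.1 hx
    exact (insertPart_weight ha x.1 x.2 hx2).symm

lemma sum_parts_coeff (Q : Finpartition s) :
    ∑ B ∈ Q.parts, (2 * (B.card : ℝ) - 1) = 2 * s.card - Q.parts.card := by
  rw [Finset.sum_sub_distrib, ← Finset.mul_sum, Finset.sum_const, nsmul_eq_mul, mul_one]
  congr 2
  rw [← Q.sum_card_parts]
  push_cast
  ring

lemma W_insert (ha : a ∉ s) (r : ℕ) (hr : 1 ≤ r) :
    W (insert a s) r = (2 * (s.card : ℝ) - r) * W s r + W s (r - 1) := by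
  rw [W, ← Finset.sum_filter_add_sum_filter_not _ (fun P => P.part a = {a}),
    sum_singleton_case ha r hr, sum_nonsingleton_case ha r, add_comm]
  congr 1
  rw [W, Finset.mul_sum]
  refine Finset.sum_congr rfl fun Q hQ => ?_
  rw [← Finset.sum_mul, sum_parts_coeff Q, (Finset.mem_filter.1 hQ).2]

end Main

section Transport

variable {e : α ↪ β} {s : Finset α}

lemma map_preimage_of_subset {t : Finset β} (e : α ↪ β) {s : Finset α} (ht : t ⊆ s.map e) :
    (t.preimage e e.injective.injOn).map e = t := by
  ext b
  simp only [Finset.mem_map, Finset.mem_preimage]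
  constructor
  · rintro ⟨x, hx, rfl⟩; exact hx
  · intro hb
    obtain ⟨x, _, rfl⟩ := Finset.mem_map.1 (ht hb)
    exact ⟨x, hb, rfl⟩

/-- Transport a partition along an embedding. -/
def mapPart (e : α ↪ β) (P : Finpartition s) : Finpartition (s.map e) where
  parts := P.parts.image (Finset.map e)
  supIndep := by
    rw [Finset.supIndep_iff_pairwiseDisjoint, Finset.coe_image]
    rintro x hx y hy hxy
    obtain ⟨t1, ht1, rfl⟩ := hx
    obtain ⟨t2, ht2, rfl⟩ := hy
    have ht12 : t1 ≠ t2 := fun h => hxy (by rw [h])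
    simp only [Function.onFun, id_eq]
    rw [Finset.disjoint_map]
    exact P.disjoint ht1 ht2 ht12
  sup_parts := by
    ext b
    rw [Finset.mem_sup]
    constructor
    · rintro ⟨v, hv, hbv⟩
      obtain ⟨t, ht, rfl⟩ := Finset.mem_image.1 hv
      obtain ⟨x, hx, rfl⟩ := Finset.mem_map.1 hbv
      exact Finset.mem_map_of_mem e (P.le ht hx)
    · intro hb
      obtain ⟨x, hx, rfl⟩ := Finset.mem_map.1 hb
      obtain ⟨t, ht, hxt⟩ := P.exists_mem hx
      exact ⟨t.map e, Finset.mem_image_of_mem _ ht, Finset.mem_map_of_mem e hxt⟩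
  bot_notMem := by
    intro h
    obtain ⟨t, ht, h0⟩ := Finset.mem_image.1 h
    have h0' : t = ⊥ := Finset.map_eq_empty.1 h0
    exact P.bot_notMem (h0' ▸ ht)

/-- Pull back a partition along an embedding. -/
noncomputable def comapPart (e : α ↪ β) (Q : Finpartition (s.map e)) : Finpartition s where
  parts := Q.parts.image (fun t => t.preimage e e.injective.injOn)
  supIndep := by
    rw [Finset.supIndep_iff_pairwiseDisjoint, Finset.coe_image]
    rintro x hx y hy hxy
    obtain ⟨t1, ht1, rfl⟩ := hx
    obtain ⟨t2, ht2, rfl⟩ := hy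
    have ht12 : t1 ≠ t2 := fun h => hxy (by rw [h])
    simp only [Function.onFun, id_eq]
    rw [Finset.disjoint_left]
    intro x hx1 hx2
    rw [Finset.mem_preimage] at hx1 hx2
    exact Finset.disjoint_left.1 (Q.disjoint ht1 ht2 ht12) hx1 hx2
  sup_parts := by
    ext x
    rw [Finset.mem_sup]
    constructor
    · rintro ⟨v, hv, hxv⟩
      obtain ⟨t, ht, rfl⟩ := Finset.mem_image.1 hv
      rw [id_eq, Finset.mem_preimage] at hxv
      exact (Finset.mem_map' e).1 (Q.le ht hxv)
    · intro hx
      obtain ⟨t, ht, hxt⟩ := Q.exists_mem (Finset.mem_map_of_mem e hx)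
      exact ⟨t.preimage e e.injective.injOn, Finset.mem_image_of_mem _ ht,
        Finset.mem_preimage.2 hxt⟩
  bot_notMem := by
    intro h
    obtain ⟨t, ht, h0⟩ := Finset.mem_image.1 h
    obtain ⟨b, hb⟩ := Q.nonempty_of_mem_parts ht
    obtain ⟨x, _, rfl⟩ := Finset.mem_map.1 (Q.le ht hb)
    have hx : x ∈ t.preimage e e.injective.injOn := Finset.mem_preimage.2 hb
    rw [h0] at hx
    exact Finset.notMem_empty x hx

lemma mapPart_parts (e : α ↪ β) (P : Finpartition s) :
    (mapPart e P).parts = P.parts.image (Finset.map e) := rfl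

lemma comapPart_parts (e : α ↪ β) (Q : Finpartition (s.map e)) :
    (comapPart e Q).parts = Q.parts.image (fun t => t.preimage e e.injective.injOn) := rfl

lemma preimage_injOn (e : α ↪ β) (Q : Finpartition (s.map e)) :
    Set.InjOn (fun t : Finset β => t.preimage e e.injective.injOn) Q.parts := by
  intro t1 ht1 t2 ht2 h
  have h1 := map_preimage_of_subset e (Q.le ht1)
  have h2 := map_preimage_of_subset e (Q.le ht2)
  simp only at h
  rw [← h1, ← h2, h]

lemma W_map (e : α ↪ β) (s : Finset α) (r : ℕ) : W (s.map e) r = W s r := by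
  rw [W, W]
  refine Finset.sum_bij' (i := fun Q _ => comapPart e Q) (j := fun P _ => mapPart e P)
    ?_ ?_ ?_ ?_ ?_
  · intro Q hQ
    have hcard := (Finset.mem_filter.1 hQ).2
    rw [Finset.mem_filter]
    refine ⟨Finset.mem_univ _, ?_⟩
    rw [comapPart_parts, Finset.card_image_of_injOn (preimage_injOn e Q), hcard]
  · intro P hP
    have hcard := (Finset.mem_filter.1 hP).2
    rw [Finset.mem_filter]
    refine ⟨Finset.mem_univ _, ?_⟩
    rw [mapPart_parts, Finset.card_image_of_injective _ (Finset.map_injective e), hcard]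
  · intro Q _
    ext1
    rw [mapPart_parts, comapPart_parts, Finset.image_image]
    have : ∀ t ∈ Q.parts,
        (Finset.map e ∘ fun t : Finset β => t.preimage e e.injective.injOn) t = id t := by
      intro t ht
      simp only [Function.comp_apply, id_eq]
      exact map_preimage_of_subset e (Q.le ht)
    rw [Finset.image_congr this, Finset.image_id]
  · intro P _
    ext1
    rw [comapPart_parts, mapPart_parts, Finset.image_image]
    have : ∀ t ∈ P.parts,
        ((fun t : Finset β => t.preimage e e.injective.injOn) ∘ Finset.map e) t = id t := by
      intro t _
      simp only [Function.comp_apply, id_eq]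
      exact Finset.preimage_map e t
    rw [Finset.image_congr this, Finset.image_id]
  · intro Q hQ
    rw [comapPart_parts, Finset.prod_image (preimage_injOn e Q)]
    refine Finset.prod_congr rfl fun t ht => ?_
    have h1 := map_preimage_of_subset e (Q.le ht)
    have h2 : (t.preimage e e.injective.injOn).card = t.card := by
      conv_rhs => rw [← h1]
      rw [Finset.card_map]
    rw [h2]

end Transport

end Stmt13

theorem stmt13 (l r : ℕ) (hl : 2 ≤ l) (hr1 : 1 ≤ r) (hrl : r ≤ l) :
    C l r = (2 * l - r - 2 : ℕ) * C (l - 1) r + C (l - 1) (r - 1) := by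
  obtain ⟨n, rfl⟩ : ∃ n, l = n + 2 := ⟨l - 2, by omega⟩
  classical
  set a : Fin (n + 2) := Fin.last (n + 1) with ha_def
  set s : Finset (Fin (n + 2)) := Finset.univ.erase a with hs_def
  have ha : a ∉ s := Finset.notMem_erase a _
  have hins : insert a s = Finset.univ := Finset.insert_erase (Finset.mem_univ a)
  have hmap : (Finset.univ : Finset (Fin (n + 1))).map Fin.castSuccEmb = s := by
    ext x
    constructor
    · intro hx
      obtain ⟨y, _, rfl⟩ := Finset.mem_map.1 hx
      rw [hs_def, Finset.mem_erase]
      exact ⟨(Fin.castSucc_lt_last y).ne, Finset.mem_univ _⟩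
    · intro hx
      rw [hs_def, Finset.mem_erase] at hx
      obtain ⟨y, hy⟩ := Fin.eq_castSucc_of_ne_last hx.1
      exact Finset.mem_map.2 ⟨y, Finset.mem_univ y, hy⟩
  have hCW : ∀ r', C (n + 1) r' = Stmt13.W s r' := by
    intro r'
    have h1 : C (n + 1) r' = Stmt13.W (Finset.univ : Finset (Fin (n + 1))) r' := rfl
    rw [h1, ← Stmt13.W_map Fin.castSuccEmb, hmap]
  have hC2 : C (n + 2) r = Stmt13.W (insert a s) r := by rw [hins]; rfl
  have hs_card : s.card = n + 1 := by
    rw [hs_def, Finset.card_erase_of_mem (Finset.mem_univ a), Finset.card_univ]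
    simp
  have hl1 : (n + 2 : ℕ) - 1 = n + 1 := rfl
  rw [hC2, Stmt13.W_insert ha r hr1, hs_card, hl1, hCW r, hCW (r - 1)]
  have h2 : ((2 * (n + 2) - r - 2 : ℕ) : ℝ) = 2 * ((n + 1 : ℕ) : ℝ) - (r : ℝ) := by
    have h3 : (2 * (n + 2) - r - 2 : ℕ) = 2 * (n + 1) - r := by omega
    rw [h3, Nat.cast_sub (by omega : r ≤ 2 * (n + 1))]
    push_cast
    ring
  rw [h2]
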